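/- Let D be a nonzero derivation of ℂ[x,y]. Then D is simple (the only ideals I with D(I) ⊆ I are 0 and ℂ[x,y]) if and only if both of the following hold: (a) the ideal of ℂ[x,y] generated by D(x) and D(y) is the unit ideal (the associated vector field has no zeroes), and (b) D admits no Darboux polynomial, i.e., there is no nonzero non-unit h ∈ ℂ[x,y] with D(h) contained in the principal ideal generated by h (the associated foliation has no invariant algebraic curve). -/

import Mathlib

open MvPolynomial

/-- The polynomial ring `ℂ[x,y]`. -/
abbrev Rxy : Type := MvPolynomial (Fin 2) ℂ

/-- A derivation of `ℂ[x,y]` is simple if the only ideals `I` with `D(I) ⊆ I`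
are the zero ideal and the whole ring. -/
def IsSimpleDer (D : Derivation ℂ Rxy Rxy) : Prop :=
  ∀ I : Ideal Rxy, (∀ a ∈ I, D a ∈ I) → I = ⊥ ∨ I = ⊤

noncomputable section

namespace SimpleDerAux

lemma nsmul_mem_ideal {I : Ideal Rxy} {n : ℕ} (hn : n ≠ 0) {z : Rxy}
    (h : n • z ∈ I) : z ∈ I := by
  rw [nsmul_eq_mul, ← map_natCast (C : ℂ →+* Rxy) n] at h
  have h2 := I.mul_mem_left (C ((n : ℂ)⁻¹)) h
  rwa [← mul_assoc, ← map_mul, inv_mul_cancel₀ (by exact_mod_cast hn), map_one, one_mul] at h2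

/-- If a prime `p` divides every element of a nonzero `D`-invariant ideal, then `p ∣ D p`. -/
lemma dvd_deriv_of_common_prime (D : Derivation ℂ Rxy Rxy) (I : Ideal Rxy)
    (hinv : ∀ a ∈ I, D a ∈ I) (hI0 : I ≠ ⊥) {p : Rxy} (hp : Prime p)
    (hdvd : ∀ g ∈ I, p ∣ g) : p ∣ D p := by
  classical
  obtain ⟨f0, hf0I, hf00⟩ := (Submodule.ne_bot_iff _).mp hI0
  obtain ⟨m, hm⟩ : ∃ m, ¬ p ^ (m + 1) ∣ f0 := FiniteMultiplicity.of_prime_left hp hf00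
  have hT : ∃ n, ∃ f, f ∈ I ∧ ¬ p ^ (n + 1) ∣ f := ⟨m, f0, hf0I, hm⟩
  obtain ⟨f, hfI, hfnd⟩ := Nat.find_spec hT
  set n0 := Nat.find hT with hn0
  have hn0pos : n0 ≠ 0 := by
    intro h
    rw [h, zero_add, pow_one] at hfnd
    exact hfnd (hdvd f hfI)
  obtain ⟨n1, hn1⟩ : ∃ n1, n0 = n1 + 1 := ⟨n0 - 1, by omega⟩
  have hall : ∀ g ∈ I, p ^ n0 ∣ g := by
    intro g hg
    by_contra hnd
    have hmin := Nat.find_min hT (m := n1) (by omega)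
    push_neg at hmin
    rw [hn1] at hnd
    exact hnd (hmin g hg)
  obtain ⟨u, hu⟩ := hall f hfI
  have hpu : ¬ p ∣ u := by
    rintro ⟨v, hv⟩
    exact hfnd ⟨v, by rw [hu, hv]; ring⟩
  have hDf : p ^ n0 ∣ D f := hall _ (hinv f hfI)
  have hpow : D (p ^ n0) = (n0 : ℕ) • (p ^ n1 * D p) := by
    rw [D.leibniz_pow, hn1]
    simp [smul_eq_mul]
  have hDfeq : D f = p ^ n0 * D u + u * ((n0 : ℕ) • (p ^ n1 * D p)) := by
    rw [hu, D.leibniz, hpow]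
    simp [smul_eq_mul, mul_comm]
  have hdvd2 : p ^ n0 ∣ u * ((n0 : ℕ) • (p ^ n1 * D p)) := by
    have heq : u * ((n0 : ℕ) • (p ^ n1 * D p)) = D f - p ^ n0 * D u := by
      rw [hDfeq]; ring
    rw [heq]
    exact dvd_sub hDf ⟨D u, rfl⟩
  have hre : u * ((n0 : ℕ) • (p ^ n1 * D p)) = p ^ n1 * (((n0 : ℕ) : Rxy) * u * D p) := by
    simp only [nsmul_eq_mul]; ring
  rw [hre, hn1, pow_succ] at hdvd2
  have hpn1 : p ^ n1 ≠ 0 := pow_ne_zero _ hp.ne_zero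
  have hdvd3 : p ∣ (((n1 + 1 : ℕ)) : Rxy) * u * D p := (mul_dvd_mul_iff_left hpn1).mp hdvd2
  have hunit : IsUnit ((((n1 + 1 : ℕ)) : Rxy)) := by
    rw [← map_natCast (C : ℂ →+* Rxy) (n1 + 1)]
    exact isUnit_iff_exists_inv.mpr ⟨C (((n1 + 1 : ℕ) : ℂ)⁻¹), by
      rw [← map_mul, mul_inv_cancel₀ (by exact_mod_cast Nat.succ_ne_zero n1), map_one]⟩
  rcases hp.dvd_mul.mp hdvd3 with h | h
  · rcases hp.dvd_mul.mp h with h' | h'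
    · exact absurd (isUnit_of_dvd_unit h' hunit) hp.not_unit
    · exact absurd h' hpu
  · exact h

/-- Kaplansky: the radical of a `D`-invariant ideal is `D`-invariant. -/
lemma deriv_mem_radical (D : Derivation ℂ Rxy Rxy) (I : Ideal Rxy)
    (hinv : ∀ a ∈ I, D a ∈ I) {a : Rxy} (ha : a ∈ I.radical) : D a ∈ I.radical := by
  obtain ⟨n, hn⟩ := ha
  have step : ∀ (m k : ℕ), a ^ (m + 1) * D a ^ k ∈ I → a ^ m * D a ^ (k + 2) ∈ I := by
    intro m k hc
    have hDc := hinv _ hc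
    cases k with
    | zero =>
      have h1 : D (a ^ (m + 1) * D a ^ 0) = (m + 1) • (a ^ m * D a) := by
        rw [pow_zero, mul_one, D.leibniz_pow]
        simp [smul_eq_mul]
      have h2 : (m + 1) • (a ^ m * D a ^ (0 + 2)) = D a * D (a ^ (m + 1) * D a ^ 0) := by
        rw [h1]
        simp only [nsmul_eq_mul]
        ring
      apply nsmul_mem_ideal (n := m + 1) (by omega)
      rw [h2]
      exact I.mul_mem_left _ hDc
    | succ k' =>
      have h1 : D (a ^ (m + 1) * D a ^ (k' + 1)) =
          a ^ (m + 1) * ((((k' + 1) : ℕ) : Rxy) * (D a ^ k' * D (D a))) +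
            D a ^ (k' + 1) * ((((m + 1) : ℕ) : Rxy) * (a ^ m * D a)) := by
        rw [D.leibniz, D.leibniz_pow, D.leibniz_pow]
        simp [smul_eq_mul, nsmul_eq_mul]
      have h2 : (m + 1) • (a ^ m * D a ^ (k' + 1 + 2)) =
          D a * D (a ^ (m + 1) * D a ^ (k' + 1)) -
            (k' + 1) • ((a ^ (m + 1) * D a ^ (k' + 1)) * D (D a)) := by
        rw [h1]
        simp only [nsmul_eq_mul]
        ring
      apply nsmul_mem_ideal (n := m + 1) (by omega)
      rw [h2]
      exact Ideal.sub_mem _ (I.mul_mem_left _ hDc) (nsmul_mem (I.mul_mem_right _ hc) _)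
  have iter : ∀ t, t ≤ n → a ^ (n - t) * D a ^ (2 * t) ∈ I := by
    intro t
    induction t with
    | zero => intro _; simpa using hn
    | succ t ih =>
      intro ht
      have h1 := ih (by omega)
      rw [show n - t = (n - (t + 1)) + 1 by omega] at h1
      have h2 := step _ _ h1
      rw [show 2 * (t + 1) = 2 * t + 2 by ring]
      exact h2
  have hfin := iter n le_rfl
  simp only [Nat.sub_self, pow_zero, one_mul] at hfin
  exact ⟨2 * n, hfin⟩

/-- A minimal prime over a radical `D`-invariant ideal is `D`-invariant. -/
lemma minimal_prime_invariant (D : Derivation ℂ Rxy Rxy) (J : Ideal Rxy)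
    (hinv : ∀ a ∈ J, D a ∈ J) (hrad : J.radical = J) {P : Ideal Rxy}
    (hP : P ∈ J.minimalPrimes) : ∀ a ∈ P, D a ∈ P := by
  classical
  have hPprime : P.IsPrime := hP.1.1
  have hfin : J.minimalPrimes.Finite := by
    rw [Ideal.minimalPrimes_eq_comap]
    exact ((minimalPrimes.finite_of_isNoetherianRing _).image _)
  have hfin' : (J.minimalPrimes \ {P}).Finite := hfin.subset Set.diff_subset
  obtain ⟨b, hbQ, hbP⟩ : ∃ b, b ∈ sInf (J.minimalPrimes \ {P}) ∧ b ∉ P := by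
    by_contra hcon
    push_neg at hcon
    have hle : (hfin'.toFinset).inf id ≤ P := by
      rw [Finset.inf_id_eq_sInf, hfin'.coe_toFinset]
      exact fun x hx => hcon x hx
    obtain ⟨P', hP'mem, hP'le⟩ := (Ideal.IsPrime.inf_le' hPprime).mp hle
    rw [hfin'.mem_toFinset] at hP'mem
    have hPP' : P ≤ P' := hP.2 hP'mem.1.1 hP'le
    exact hP'mem.2 (le_antisymm hP'le hPP')
  intro a haP
  have hmul : a * b ∈ J := by
    rw [← hrad, ← Ideal.sInf_minimalPrimes]
    rw [Ideal.mem_sInf]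
    intro P' hP'
    by_cases hPP : P' = P
    · exact hPP ▸ Ideal.mul_mem_right _ _ haP
    · have hmemdiff : P' ∈ J.minimalPrimes \ {P} := ⟨hP', hPP⟩
      have hb : b ∈ P' := (sInf_le hmemdiff) hbQ
      exact Ideal.mul_mem_left _ _ hb
  have hDP : D (a * b) ∈ P := hP.1.2 (hinv _ hmul)
  have hbDa : b * D a ∈ P := by
    have heq : b * D a = D (a * b) - a * D b := by
      rw [D.leibniz]; simp only [smul_eq_mul]; ring
    rw [heq]
    exact Ideal.sub_mem _ hDP (Ideal.mul_mem_right _ _ haP)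
  rcases hPprime.mem_or_mem hbDa with h | h
  · exact absurd h hbP
  · exact h

/-- The fraction field `ℂ(x)`. -/
abbrev Fc : Type := FractionRing (Polynomial ℂ)

set_option maxHeartbeats 1000000 in
set_option synthInstance.maxHeartbeats 400000 in
/-- Key algebraic lemma: if a prime `q` of `ℂ[x][y]` and an element not divisible by it are both
killed by a homomorphism to a field, then the image of (the inner) `x` is algebraic over `ℂ`. -/
lemma crux_poly {K : Type} [Field K] [Algebra ℂ K]
    (ψ : Polynomial (Polynomial ℂ) →ₐ[ℂ] K) (q f : Polynomial (Polynomial ℂ))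
    (hq : Prime q) (h0 : ψ q = 0) (h1 : ψ f = 0) (hnd : ¬ q ∣ f) :
    IsAlgebraic ℂ (ψ (Polynomial.C Polynomial.X)) := by
  by_contra htr
  set ξ := ψ (Polynomial.C Polynomial.X) with hξ
  have hinj : Function.Injective (Polynomial.aeval ξ : Polynomial ℂ →ₐ[ℂ] K) :=
    transcendental_iff_injective.mp htr
  have hcompeq : ψ.comp Polynomial.CAlgHom = (Polynomial.aeval ξ : Polynomial ℂ →ₐ[ℂ] K) :=
    Polynomial.algHom_ext (by simp [Polynomial.CAlgHom]; exact hξ.symm)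
  have hcomp : ∀ p : Polynomial ℂ, ψ (Polynomial.C p) = Polynomial.aeval ξ p :=
    fun p => DFunLike.congr_fun hcompeq p
  set ρ : Polynomial ℂ →+* K :=
    ((Polynomial.aeval ξ : Polynomial ℂ →ₐ[ℂ] K) : Polynomial ℂ →+* K) with hρ
  have hρinj : Function.Injective ρ := hinj
  have hρ'ex : ∃ r : Fc →+* K, r.comp (algebraMap (Polynomial ℂ) Fc) = ρ :=
    ⟨IsFractionRing.lift hρinj, RingHom.ext fun x => IsFractionRing.lift_algebraMap hρinj x⟩
  obtain ⟨ρ', hρ'comp⟩ := hρ'ex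
  set η := ψ Polynomial.X with hη
  have key : ∀ g : Polynomial (Polynomial ℂ),
      Polynomial.eval₂ ρ' η (g.map (algebraMap (Polynomial ℂ) Fc)) = ψ g := by
    intro g
    rw [Polynomial.eval₂_map, hρ'comp]
    have heq : Polynomial.eval₂RingHom ρ η = (ψ : Polynomial (Polynomial ℂ) →+* K) := by
      apply Polynomial.ringHom_ext
      · intro a
        simp only [Polynomial.coe_eval₂RingHom, Polynomial.eval₂_C]
        exact (hcomp a).symm
      · simp; exact hη
    rw [← Polynomial.coe_eval₂RingHom, heq]
    rfl
  have hdeg : q.natDegree ≠ 0 := by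
    intro h
    have hqC := Polynomial.eq_C_of_natDegree_eq_zero h
    have hz0 : ψ (Polynomial.C (q.coeff 0)) = 0 := by rw [← hqC, h0]
    have hz : ρ (q.coeff 0) = 0 := by
      have h2 : ρ (q.coeff 0) = ψ (Polynomial.C (q.coeff 0)) := (hcomp _).symm
      rw [h2]; exact hz0
    have hc0 : q.coeff 0 = 0 := hρinj (by rw [hz, map_zero])
    exact hq.ne_zero (by rw [hqC, hc0, map_zero])
  have hprim : q.IsPrimitive := by
    intro r hr
    obtain ⟨g, hg⟩ := hr
    rcases hq.irreducible.isUnit_or_isUnit hg with h | h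
    · exact Polynomial.isUnit_C.mp h
    · exfalso
      obtain ⟨s, hsu, hsg⟩ := Polynomial.isUnit_iff.mp h
      apply hdeg
      rw [hg, ← hsg, ← Polynomial.C_mul, Polynomial.natDegree_C]
  set qF := q.map (algebraMap (Polynomial ℂ) Fc) with hqF
  set fF := f.map (algebraMap (Polynomial ℂ) Fc) with hfF
  have hirr : Irreducible qF :=
    (Polynomial.IsPrimitive.irreducible_iff_irreducible_map_fraction_map hprim).mp hq.irreducible
  have hfne : f ≠ 0 := fun h => hnd (h ▸ dvd_zero q)
  have hndF : ¬ qF ∣ fF := by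
    intro hdvd'
    apply hnd
    have hcontent : f = Polynomial.C f.content * f.primPart := f.eq_C_content_mul_primPart
    have hcne : f.content ≠ 0 := by
      rw [Ne, Polynomial.content_eq_zero_iff]; exact hfne
    have hunit : IsUnit ((Polynomial.C f.content).map (algebraMap (Polynomial ℂ) Fc)) := by
      rw [Polynomial.map_C]
      refine Polynomial.isUnit_C.mpr (isUnit_iff_ne_zero.mpr ?_)
      exact fun h => hcne ((IsFractionRing.injective (Polynomial ℂ) Fc) (by rw [h, map_zero]))
    have h2 : qF ∣ (f.primPart).map (algebraMap (Polynomial ℂ) Fc) := by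
      obtain ⟨w, hw⟩ := hunit
      have hfFeq : fF = ↑w * (f.primPart).map (algebraMap (Polynomial ℂ) Fc) := by
        rw [hw, hfF, ← Polynomial.map_mul, ← hcontent]
      exact Units.dvd_mul_left.mp (hfFeq ▸ hdvd')
    have h3 : q ∣ f.primPart :=
      hprim.dvd_of_fraction_map_dvd_fraction_map h2
    exact h3.trans f.primPart_dvd
  have hrel : IsRelPrime qF fF := by
    intro d hdq hdf
    obtain ⟨e, he⟩ := hdq
    rcases hirr.isUnit_or_isUnit he with h | h
    · exact h
    · exfalso
      obtain ⟨einv, hei⟩ := isUnit_iff_exists_inv.mp h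
      have hqd : qF ∣ d := ⟨einv, by rw [he, mul_assoc, hei, mul_one]⟩
      exact hndF (hqd.trans hdf)
  letI : IsPrincipalIdealRing (Polynomial Fc) := EuclideanDomain.to_principal_ideal_domain (R := Polynomial Fc)
  obtain ⟨A, B, hAB⟩ := hrel.isCoprime
  have hq0 : Polynomial.eval₂RingHom ρ' η qF = 0 := by
    show Polynomial.eval₂ ρ' η qF = 0
    rw [hqF, key q, h0]
  have hf0' : Polynomial.eval₂RingHom ρ' η fF = 0 := by
    show Polynomial.eval₂ ρ' η fF = 0
    rw [hfF, key f, h1]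
  have hcontra := congrArg (Polynomial.eval₂RingHom ρ' η) hAB
  rw [map_add, map_mul, map_mul, map_one, hq0, hf0', mul_zero, mul_zero, add_zero] at hcontra
  exact zero_ne_one hcontra

lemma crux_mv1 {K : Type} [Field K] [Algebra ℂ K] (φ : Rxy →ₐ[ℂ] K) (q f : Rxy)
    (hq : Prime q) (h0 : φ q = 0) (h1 : φ f = 0) (hnd : ¬ q ∣ f) :
    IsAlgebraic ℂ (φ (X 1)) := by
  let e₁ : MvPolynomial (Fin 1) ℂ ≃ₐ[ℂ] Polynomial ℂ :=
    (finSuccEquiv ℂ 0).trans (Polynomial.mapAlgEquiv (isEmptyAlgEquiv ℂ (Fin 0)))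
  let e : Rxy ≃ₐ[ℂ] Polynomial (Polynomial ℂ) :=
    (finSuccEquiv ℂ 1).trans (Polynomial.mapAlgEquiv e₁)
  have he1 : e₁ (X 0) = Polynomial.X := by
    show Polynomial.mapAlgEquiv (isEmptyAlgEquiv ℂ (Fin 0)) (finSuccEquiv ℂ 0 (X 0)) = _
    rw [finSuccEquiv_X_zero, Polynomial.coe_mapAlgEquiv, Polynomial.map_X]
  have heX1 : e (X 1) = Polynomial.C Polynomial.X := by
    show Polynomial.mapAlgEquiv e₁ (finSuccEquiv ℂ 1 (X 1)) = _
    rw [show (X (1 : Fin 2) : Rxy) = X (Fin.succ 0) from rfl, finSuccEquiv_X_succ,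
      Polynomial.coe_mapAlgEquiv, Polynomial.map_C]
    exact congrArg (fun z => Polynomial.C z) he1
  have hmain := crux_poly (ψ := φ.comp (e.symm : Polynomial (Polynomial ℂ) →ₐ[ℂ] Rxy))
    (q := e q) (f := e f)
    ((MulEquiv.prime_iff e).mpr hq)
    (by simp [h0])
    (by simp [h1])
    (by intro hdv; exact hnd (by simpa using map_dvd e.symm hdv))
  have hsymm : e.symm (Polynomial.C Polynomial.X) = X 1 := by
    rw [← heX1, AlgEquiv.symm_apply_apply]
  simpa [hsymm] using hmain

lemma crux_mv0 {K : Type} [Field K] [Algebra ℂ K] (φ : Rxy →ₐ[ℂ] K) (q f : Rxy)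
    (hq : Prime q) (h0 : φ q = 0) (h1 : φ f = 0) (hnd : ¬ q ∣ f) :
    IsAlgebraic ℂ (φ (X 0)) := by
  let s : Rxy ≃ₐ[ℂ] Rxy := renameEquiv ℂ (Equiv.swap (0 : Fin 2) 1)
  have hmain := crux_mv1 (φ.comp (s : Rxy →ₐ[ℂ] Rxy)) (s.symm q) (s.symm f)
    ((MulEquiv.prime_iff s.symm).mpr hq)
    (by simp [h0])
    (by simp [h1])
    (by intro hdv; exact hnd (by simpa using map_dvd s hdv))
  have hs1 : s (X 1) = X 0 := by
    show rename (Equiv.swap (0 : Fin 2) 1) (X 1) = X 0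
    rw [rename_X, Equiv.swap_apply_right]
  simpa [hs1] using hmain

set_option maxHeartbeats 1000000 in
set_option synthInstance.maxHeartbeats 400000 in
lemma exists_sub_C_mem (P : Ideal Rxy) (hP : P.IsPrime) (q f : Rxy)
    (hq : Prime q) (hqP : q ∈ P) (hfP : f ∈ P) (hnd : ¬ q ∣ f) (i : Fin 2) :
    ∃ a : ℂ, X i - C a ∈ P := by
  haveI := hP
  letI : Algebra ℂ (FractionRing (Rxy ⧸ P)) :=
    ((algebraMap (Rxy ⧸ P) (FractionRing (Rxy ⧸ P))).comp
      ((Ideal.Quotient.mk P).comp (algebraMap ℂ Rxy))).toAlgebra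
  let φ : Rxy →ₐ[ℂ] FractionRing (Rxy ⧸ P) :=
    { toRingHom := (algebraMap (Rxy ⧸ P) (FractionRing (Rxy ⧸ P))).comp (Ideal.Quotient.mk P),
      commutes' := fun c => rfl }
  have hker : ∀ z : Rxy, φ z = 0 ↔ z ∈ P := by
    intro z
    rw [show φ z = algebraMap (Rxy ⧸ P) (FractionRing (Rxy ⧸ P)) (Ideal.Quotient.mk P z) from rfl]
    constructor
    · intro h
      rw [show (0 : FractionRing (Rxy ⧸ P)) = algebraMap (Rxy ⧸ P) (FractionRing (Rxy ⧸ P)) 0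
        from (map_zero _).symm] at h
      exact Ideal.Quotient.eq_zero_iff_mem.mp (IsFractionRing.injective (Rxy ⧸ P) _ h)
    · intro h
      rw [Ideal.Quotient.eq_zero_iff_mem.mpr h, map_zero]
  have halg : IsAlgebraic ℂ (φ (X i)) := by
    fin_cases i
    · exact crux_mv0 φ q f hq ((hker q).mpr hqP) ((hker f).mpr hfP) hnd
    · exact crux_mv1 φ q f hq ((hker q).mpr hqP) ((hker f).mpr hfP) hnd
  obtain ⟨a, ha⟩ : ∃ a : ℂ, φ (X i) = algebraMap ℂ (FractionRing (Rxy ⧸ P)) a := by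
    have hint := halg.isIntegral
    set p := minpoly ℂ (φ (X i)) with hpdef
    have hmon := minpoly.monic hint
    have hdegree : p.degree = 1 :=
      IsAlgClosed.degree_eq_one_of_irreducible ℂ (minpoly.irreducible hint)
    have hnd1 : p.natDegree = 1 := Polynomial.natDegree_eq_of_degree_eq_some hdegree
    have hco : p.coeff 1 = 1 := by
      have := hmon.coeff_natDegree
      rwa [hnd1] at this
    have hpeq : p = Polynomial.C (p.coeff 1) * Polynomial.X + Polynomial.C (p.coeff 0) :=
      Polynomial.eq_X_add_C_of_degree_le_one (by rw [hdegree])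
    have h0' := minpoly.aeval ℂ (φ (X i))
    rw [← hpdef, hpeq, hco] at h0'
    simp only [map_one, one_mul, map_add, Polynomial.aeval_X, Polynomial.aeval_C] at h0'
    exact ⟨-(p.coeff 0), by rw [map_neg]; exact eq_neg_of_add_eq_zero_left h0'⟩
  refine ⟨a, (hker _).mp ?_⟩
  rw [map_sub, ha, show (C a : Rxy) = algebraMap ℂ Rxy a from rfl, φ.commutes, sub_self]


lemma eval_deriv_zero (D : Derivation ℂ Rxy Rxy) (x₀ : Fin 2 → ℂ)
    (h : ∀ i, eval x₀ (D (X i)) = 0) : ∀ a : Rxy, eval x₀ (D a) = 0 := by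
  intro a
  induction a using MvPolynomial.induction_on with
  | C c => simp
  | add p q' hp hq' => simp [map_add, hp, hq']
  | mul_X p i hp => rw [D.leibniz]; simp [smul_eq_mul, hp, h i]

end SimpleDerAux

end

open SimpleDerAux in
/-- A nonzero derivation `D` of `ℂ[x,y]` is simple if and only if (a) the ideal generated
by `D(x)` and `D(y)` is the unit ideal (the vector field has no zeroes), and (b) `D` has
no Darboux polynomial (the foliation has no invariant algebraic curve). -/
theorem simple_iff_no_zeroes_and_no_darboux (D : Derivation ℂ Rxy Rxy) (hD : D ≠ 0) :
    IsSimpleDer D ↔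
      (Ideal.span {D (X 0), D (X 1)} = ⊤ ∧
        ¬ ∃ h : Rxy, h ≠ 0 ∧ ¬ IsUnit h ∧ D h ∈ Ideal.span {h}) := by
  constructor
  · intro hs
    constructor
    · by_contra hne
      obtain ⟨m, hm, hsub⟩ := Ideal.exists_le_maximal _ hne
      obtain ⟨x₀, rfl⟩ := (isMaximal_iff_eq_vanishingIdeal_singleton (I := m)).mp hm
      have hXi : ∀ i : Fin 2, eval x₀ (D (X i)) = 0 := by
        intro i
        have hmem : D (X i) ∈ vanishingIdeal ℂ ({x₀} : Set (Fin 2 → ℂ)) := by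
          apply hsub
          apply Ideal.subset_span
          fin_cases i
          · exact Set.mem_insert _ _
          · exact Set.mem_insert_of_mem _ rfl
        exact by simpa [coe_aeval_eq_eval] using (mem_vanishingIdeal_singleton_iff x₀ _).mp hmem
      have hinv : ∀ a ∈ vanishingIdeal ℂ ({x₀} : Set (Fin 2 → ℂ)),
          D a ∈ vanishingIdeal ℂ ({x₀} : Set (Fin 2 → ℂ)) := fun a _ =>
        (mem_vanishingIdeal_singleton_iff x₀ _).mpr (by simpa [coe_aeval_eq_eval] using eval_deriv_zero D x₀ hXi a)
      rcases hs _ hinv with h | h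
      · have hmem : (X 0 - C (x₀ 0) : Rxy) ∈ vanishingIdeal ℂ ({x₀} : Set (Fin 2 → ℂ)) := by
          rw [mem_vanishingIdeal_singleton_iff]
          simp
        rw [h, Ideal.mem_bot] at hmem
        have hcontra := congrArg (eval (fun _ => x₀ 0 + 1)) hmem
        simp at hcontra
      · exact hm.ne_top h
    · rintro ⟨h, h0, hu, hdvd⟩
      have hinv : ∀ a ∈ Ideal.span {h}, D a ∈ Ideal.span {h} := by
        intro a ha
        rw [Ideal.mem_span_singleton] at ha hdvd ⊢
        obtain ⟨c, rfl⟩ := ha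
        rw [D.leibniz, smul_eq_mul, smul_eq_mul]
        exact dvd_add (dvd_mul_right h (D c)) (hdvd.mul_left c)
      rcases hs _ hinv with hbot | htop
      · exact h0 (by rwa [Ideal.span_singleton_eq_bot] at hbot)
      · exact hu (by rwa [Ideal.span_singleton_eq_top] at htop)
  · rintro ⟨ha, hb⟩ I hinv
    by_contra hcon
    push_neg at hcon
    obtain ⟨hIbot, hItop⟩ := hcon
    have nocommon : ∀ (J : Ideal Rxy), (∀ a ∈ J, D a ∈ J) → J ≠ ⊥ →
        ∀ p : Rxy, Prime p → ∃ g ∈ J, ¬ p ∣ g := by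
      intro J hJ hJ0 p hp
      by_contra hall
      push_neg at hall
      exact hb ⟨p, hp.ne_zero, hp.not_unit,
        Ideal.mem_span_singleton.mpr (dvd_deriv_of_common_prime D J hJ hJ0 hp hall)⟩
    set J := I.radical with hJdef
    have hJinv : ∀ a ∈ J, D a ∈ J := fun a haJ => deriv_mem_radical D I hinv haJ
    have hJbot : J ≠ ⊥ := by
      intro h
      exact hIbot (le_bot_iff.mp (h ▸ Ideal.le_radical))
    have hJtop : J ≠ ⊤ := fun h => hItop (Ideal.radical_eq_top.mp h)
    obtain ⟨M, hMmax, hJM⟩ := Ideal.exists_le_maximal J hJtop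
    haveI := hMmax.isPrime
    obtain ⟨P, hPmin, hPM⟩ := Ideal.exists_minimalPrimes_le hJM
    have hPprime : P.IsPrime := hPmin.1.1
    have hJP : J ≤ P := hPmin.1.2
    have hPinv : ∀ a ∈ P, D a ∈ P :=
      minimal_prime_invariant D J hJinv (by rw [hJdef, Ideal.radical_idem]) hPmin
    have hPbot : P ≠ ⊥ := by
      intro h
      exact hJbot (le_bot_iff.mp (h ▸ hJP))
    obtain ⟨f0, hf0P, hf00⟩ := (Submodule.ne_bot_iff _).mp hPbot
    obtain ⟨M0, hM0, hassoc⟩ := UniqueFactorizationMonoid.exists_prime_factors f0 hf00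
    have hprodP : M0.prod ∈ P := by
      obtain ⟨u, hu⟩ := hassoc
      have heq : M0.prod = f0 * ↑u⁻¹ := by
        rw [← hu, mul_assoc]
        simp
      rw [heq]
      exact Ideal.mul_mem_right _ _ hf0P
    obtain ⟨q, hqM0, hqP⟩ := (hPprime.multiset_prod_mem_iff_exists_mem _).mp hprodP
    have hqprime : Prime q := hM0 q hqM0
    obtain ⟨f, hfP, hnd⟩ := nocommon P hPinv hPbot q hqprime
    obtain ⟨a0, ha0⟩ := exists_sub_C_mem P hPprime q f hqprime hqP hfP hnd 0
    obtain ⟨a1, ha1⟩ := exists_sub_C_mem P hPprime q f hqprime hqP hfP hnd 1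
    have hDX0 : D (X 0) ∈ P := by
      have hmem := hPinv _ ha0
      rwa [map_sub, derivation_C, sub_zero] at hmem
    have hDX1 : D (X 1) ∈ P := by
      have hmem := hPinv _ ha1
      rwa [map_sub, derivation_C, sub_zero] at hmem
    apply hPprime.ne_top
    rw [eq_top_iff, ← ha]
    apply Ideal.span_le.mpr
    rintro z hz
    rcases hz with rfl | hz
    · exact hDX0
    · rw [Set.mem_singleton_iff] at hz
      exact hz ▸ hDX1
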